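/- For every k ≥ 1 there exists a connected graph G on 3k vertices whose minimum simultaneous dominating set has size k and whose minimum vertex cover has size 2k − 1; hence the bound |C′| ≤ 2|S′| − 1 is tight. -/

import Mathlib

open SimpleGraph

variable {V : Type*}

/-- Number of connected components of a graph. -/
noncomputable def numComponents (G : SimpleGraph V) : ℕ := Nat.card G.ConnectedComponent

/-- A vertex is a cut vertex if its removal increases the number of connected components. -/
def IsCutVertex (G : SimpleGraph V) (v : V) : Prop :=
  numComponents G < numComponents (G.induce {u | u ≠ v})

/-- `T` is a spanning tree of `G`: a subgraph on all vertices of `G` that is a tree. -/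
def IsSpanningTree (G T : SimpleGraph V) : Prop := T ≤ G ∧ T.IsTree

/-- `v` is dominated by `S` in the graph `T`. -/
def DominatedIn (T : SimpleGraph V) (S : Set V) (v : V) : Prop :=
  v ∈ S ∨ ∃ u ∈ S, T.Adj v u

/-- `v` is simultaneously dominated by `S`: dominated in every spanning tree of `G`. -/
def SimDominated (G : SimpleGraph V) (S : Set V) (v : V) : Prop :=
  ∀ T : SimpleGraph V, IsSpanningTree G T → DominatedIn T S v

/-- `S` is a simultaneous dominating set of `G`. -/
def IsSDSet (G : SimpleGraph V) (S : Set V) : Prop := ∀ v, SimDominated G S v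

/-- `C` is a vertex cover of `G`. -/
def IsVertexCover (G : SimpleGraph V) (C : Set V) : Prop :=
  ∀ ⦃u v : V⦄, G.Adj u v → u ∈ C ∨ v ∈ C

/-- A block of `G`: a maximal vertex set inducing a connected subgraph without cut vertices. -/
def IsBlock (G : SimpleGraph V) (B : Set V) : Prop :=
  B.Nonempty ∧ (G.induce B).Connected ∧ (∀ x, ¬ IsCutVertex (G.induce B) x) ∧
    ∀ B' : Set V, B ⊆ B' → (G.induce B').Connected →
      (∀ x, ¬ IsCutVertex (G.induce B') x) → B' = B

/-- 2-connected: connected, at least 3 vertices, no cut vertex. -/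
def TwoConnected (G : SimpleGraph V) [Fintype V] : Prop :=
  G.Connected ∧ 3 ≤ Fintype.card V ∧ ∀ v, ¬ IsCutVertex G v

/-- Colours 1, 0, 0̂. -/
inductive Col : Type
  | one | zero | zhat
deriving DecidableEq

/-- `S` is an `f`-respecting simultaneous dominating set of `G`. -/
def RespSDS (G : SimpleGraph V) (f : V → Col) (S : Set V) : Prop :=
  (∀ v, f v = Col.one → v ∈ S) ∧ ∀ v, f v = Col.zhat → SimDominated G S v

/-- A minimum `f`-respecting simultaneous dominating set. -/
def MinRespSDS (G : SimpleGraph V) (f : V → Col) (S : Set V) : Prop :=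
  RespSDS G f S ∧ ∀ S' : Set V, RespSDS G f S' → S.ncard ≤ S'.ncard

section Stmt7Aux

namespace Stmt7Aux

variable {k : ℕ}

/-- parent function for the spanning tree, rooted at 0. -/
def pare (k : ℕ) (v : Fin (3*k)) : Fin (3*k) :=
  if v.val < k then ⟨v.val - 1, by have := v.isLt; omega⟩
  else ⟨v.val - k, by have := v.isLt; omega⟩

lemma pare_val (v : Fin (3*k)) :
    (pare k v).val = if v.val < k then v.val - 1 else v.val - k := by
  unfold pare; split <;> rfl

lemma kpos (v : Fin (3*k)) : 1 ≤ k := by have := v.isLt; omega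

lemma pare_lt (v : Fin (3*k)) (h : v.val ≠ 0) : (pare k v).val < v.val := by
  have hk := kpos v; rw [pare_val]; split <;> omega

lemma pare_le (v : Fin (3*k)) : (pare k v).val ≤ v.val := by
  rw [pare_val]; split <;> omega

lemma pare_iter_le (m : ℕ) (v : Fin (3*k)) : ((pare k)^[m] v).val ≤ v.val := by
  induction m with
  | zero => simp
  | succ m ih => rw [Function.iterate_succ_apply']; exact le_trans (pare_le _) ih

/-- The graph: clique on `{0,…,k-1}`, pendant paths `i — i+k — i+2k`. -/
def Gr (k : ℕ) : SimpleGraph (Fin (3*k)) where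
  Adj i j := i ≠ j ∧ ((i.val < k ∧ j.val < k) ∨ j.val = i.val + k ∨ i.val = j.val + k)
  symm := ⟨by rintro i j ⟨h1, h2⟩; exact ⟨h1.symm, by tauto⟩⟩
  loopless := ⟨by rintro i ⟨h1, _⟩; exact h1 rfl⟩

/-- The spanning tree: caterpillar given by the parent function. -/
def Tr (k : ℕ) : SimpleGraph (Fin (3*k)) where
  Adj u v := (u.val ≠ 0 ∧ v = pare k u) ∨ (v.val ≠ 0 ∧ u = pare k v)
  symm := ⟨by rintro u v (h | h); exacts [Or.inr h, Or.inl h]⟩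
  loopless := by
    constructor
    rintro u (⟨h0, he⟩ | ⟨h0, he⟩) <;>
      · have h1 := pare_lt u h0
        have h2 := congrArg Fin.val he
        omega

lemma Gr_adj_pare (v : Fin (3*k)) (h0 : v.val ≠ 0) : (Gr k).Adj v (pare k v) := by
  refine ⟨Fin.ne_of_val_ne (pare_lt v h0).ne', ?_⟩
  have := v.isLt
  rw [pare_val]
  rcases Nat.lt_or_ge v.val k with h | h
  · rw [if_pos h]; omega
  · rw [if_neg (by omega)]; omega

lemma Tr_le_Gr : Tr k ≤ Gr k := by
  rintro u v (⟨h0, rfl⟩ | ⟨h0, rfl⟩)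
  · exact Gr_adj_pare u h0
  · exact (Gr_adj_pare v h0).symm

lemma walk_closed {V : Type*} {T : SimpleGraph V} {A : Set V}
    (hA : ∀ ⦃u v⦄, T.Adj u v → u ∈ A → v ∈ A) :
    ∀ {x y : V}, T.Walk x y → x ∈ A → y ∈ A := by
  intro x y w
  induction w with
  | nil => exact id
  | cons h p ih => exact fun hx => ih (hA h hx)

lemma Tr_reach_zero (h3 : 0 < 3*k) :
    ∀ n (v : Fin (3*k)), v.val ≤ n → (Tr k).Reachable v ⟨0, h3⟩ := by
  intro n
  induction n with
  | zero =>
    intro v hv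
    have : v = ⟨0, h3⟩ := Fin.ext (show v.val = 0 by omega)
    rw [this]
  | succ n ih =>
    intro v hv
    by_cases h0 : v.val = 0
    · have : v = ⟨0, h3⟩ := Fin.ext (show v.val = 0 from h0)
      rw [this]
    · have h1 : (Tr k).Adj v (pare k v) := Or.inl ⟨h0, rfl⟩
      exact h1.reachable.trans (ih _ (by have := pare_lt v h0; omega))

lemma Tr_connected (hk : 1 ≤ k) : (Tr k).Connected := by
  have h3 : 0 < 3*k := by omega
  rw [connected_iff_exists_forall_reachable]
  exact ⟨⟨0, h3⟩, fun w => (Tr_reach_zero h3 w.val w le_rfl).symm⟩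

lemma Tr_acyclic : (Tr k).IsAcyclic := by
  rw [isAcyclic_iff_forall_adj_isBridge]
  have key : ∀ u : Fin (3*k), u.val ≠ 0 → (Tr k).IsBridge s(u, pare k u) := by
    intro u h0
    rw [isBridge_iff]
    rintro ⟨w⟩
    have hA : ∀ ⦃x y : Fin (3*k)⦄, (Tr k \ fromEdgeSet {s(u, pare k u)}).Adj x y →
        x ∈ {z : Fin (3*k) | ∃ m, (pare k)^[m] z = u} →
        y ∈ {z : Fin (3*k) | ∃ m, (pare k)^[m] z = u} := by
      rintro x y hxy ⟨m, hm⟩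
      rw [sdiff_adj, fromEdgeSet_adj] at hxy
      obtain ⟨hxy, hne⟩ := hxy
      have hne' : s(x, y) ≠ s(u, pare k u) := by
        intro h
        exact hne ⟨by simp [h], fun hcontra => (Tr k).loopless.irrefl x (hcontra ▸ hxy)⟩
      rcases hxy with ⟨hx0, rfl⟩ | ⟨hy0, rfl⟩
      · cases m with
        | zero =>
          simp only [Function.iterate_zero_apply] at hm
          subst hm
          exact absurd rfl hne'
        | succ m =>
          rw [Function.iterate_succ_apply] at hm
          exact ⟨m, hm⟩
      · exact ⟨m + 1, by rw [Function.iterate_succ_apply]; exact hm⟩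
    have hmem := walk_closed hA w ⟨0, by simp⟩
    obtain ⟨m, hm⟩ := hmem
    have h1 := pare_iter_le m (pare k u)
    have h2 := pare_lt u h0
    have h3 := congrArg Fin.val hm
    omega
  intro v w hvw
  rcases hvw with ⟨h0, rfl⟩ | ⟨h0, rfl⟩
  · exact key v h0
  · rw [Sym2.eq_swap]; exact key w h0

lemma Tr_spanning (hk : 1 ≤ k) : IsSpanningTree (Gr k) (Tr k) :=
  ⟨Tr_le_Gr, ⟨Tr_connected hk, Tr_acyclic⟩⟩

lemma Gr_connected (hk : 1 ≤ k) : (Gr k).Connected :=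
  (Tr_connected hk).mono Tr_le_Gr

/-- the only `Gr`-neighbour of the leaf `i+2k` is `i+k`. -/
lemma c_unique_nbr {i : ℕ} (hi : i < k) {u : Fin (3*k)}
    (h : (Gr k).Adj ⟨i + 2*k, by omega⟩ u) : u = ⟨i + k, by omega⟩ := by
  obtain ⟨hne, hcase⟩ := h
  have hu := u.isLt
  apply Fin.ext
  simp only at hcase ⊢
  omega

lemma exists_adj_of_reachable {V : Type*} {T : SimpleGraph V} {x y : V}
    (h : T.Reachable x y) (hne : x ≠ y) : ∃ u, T.Adj x u := by
  obtain ⟨w⟩ := h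
  cases w with
  | nil => exact absurd rfl hne
  | cons h p => exact ⟨_, h⟩

lemma spanning_bc {T : SimpleGraph (Fin (3*k))} (hT : IsSpanningTree (Gr k) T)
    {i : ℕ} (hi : i < k) : T.Adj ⟨i + 2*k, by omega⟩ ⟨i + k, by omega⟩ := by
  obtain ⟨hle, htree⟩ := hT
  have hconn := htree.isConnected
  have hne : (⟨i + 2*k, by omega⟩ : Fin (3*k)) ≠ ⟨i + k, by omega⟩ :=
    Fin.ne_of_val_ne (by simp; omega)
  obtain ⟨u, hadj⟩ := exists_adj_of_reachable
    (hconn.preconnected ⟨i + 2*k, by omega⟩ ⟨i + k, by omega⟩) hne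
  have := c_unique_nbr hi (hle hadj)
  rw [this] at hadj
  exact hadj

lemma spanning_ab {T : SimpleGraph (Fin (3*k))} (hT : IsSpanningTree (Gr k) T)
    {i : ℕ} (hi : i < k) : T.Adj ⟨i, by omega⟩ ⟨i + k, by omega⟩ := by
  obtain ⟨hle, htree⟩ := hT
  have hconn := htree.isConnected
  by_contra hab
  set a : Fin (3*k) := ⟨i, by omega⟩ with ha
  set b : Fin (3*k) := ⟨i + k, by omega⟩ with hb
  set c : Fin (3*k) := ⟨i + 2*k, by omega⟩ with hc
  have hA : ∀ ⦃x y : Fin (3*k)⦄, T.Adj x y → x ∈ ({b, c} : Set (Fin (3*k))) →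
      y ∈ ({b, c} : Set (Fin (3*k))) := by
    rintro x y hxy (rfl | rfl)
    · obtain ⟨hne, hcase⟩ := hle hxy
      have hy := y.isLt
      have hyval : y.val = i + 2*k ∨ y.val = i := by
        simp only [hb] at hcase; omega
      rcases hyval with h | h
      · right; exact Fin.ext (by simp [hc, h])
      · exfalso
        have : y = a := Fin.ext (by simp [ha, h])
        rw [this] at hxy
        exact hab hxy.symm
    · left
      exact c_unique_nbr hi (hle hxy)
  obtain ⟨w⟩ := hconn.preconnected b a
  have := walk_closed hA w (Or.inl rfl)
  have hk := kpos a
  rcases this with h | h <;>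
    · have := congrArg Fin.val h
      simp [ha, hb, hc] at this
      omega

lemma ncard_range {m : ℕ} (f : Fin m → Fin (3*k)) (hf : Function.Injective f) :
    (Set.range f).ncard = m := by
  rw [← Set.image_univ, Set.ncard_image_of_injective _ hf, Set.ncard_univ,
    Nat.card_eq_fintype_card, Fintype.card_fin]

end Stmt7Aux

open Stmt7Aux

end Stmt7Aux

open Stmt7Aux in
/-- For every `k ≥ 1` there is a connected graph on `3k` vertices whose minimum
SD-set has size `k` and whose minimum vertex cover has size `2k - 1`. -/
theorem stmt7 (k : ℕ) (hk : 1 ≤ k) :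
    ∃ G : SimpleGraph (Fin (3 * k)), G.Connected ∧
      (∃ S : Set (Fin (3 * k)), IsSDSet G S ∧ S.ncard = k ∧
        ∀ S' : Set (Fin (3 * k)), IsSDSet G S' → k ≤ S'.ncard) ∧
      (∃ C : Set (Fin (3 * k)), _root_.IsVertexCover G C ∧ C.ncard = 2 * k - 1 ∧
        ∀ C' : Set (Fin (3 * k)), _root_.IsVertexCover G C' → 2 * k - 1 ≤ C'.ncard) := by
  classical
  refine ⟨Gr k, Gr_connected hk, ?_, ?_⟩
  · refine ⟨{v | k ≤ v.val ∧ v.val < 2*k}, ?_, ?_, ?_⟩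
    · intro v T hT
      have hv := v.isLt
      rcases Nat.lt_or_ge v.val k with h1 | h1
      · right
        refine ⟨⟨v.val + k, by omega⟩, by simp only [Set.mem_setOf_eq]; omega, ?_⟩
        exact spanning_ab hT h1
      rcases Nat.lt_or_ge v.val (2*k) with h2 | h2
      · left; exact ⟨h1, h2⟩
      · right
        have hi : v.val - 2*k < k := by omega
        refine ⟨⟨(v.val - 2*k) + k, by omega⟩, by simp only [Set.mem_setOf_eq]; omega, ?_⟩
        have h3 := spanning_bc hT hi
        convert h3 using 2
        exact (by omega : v.val = (v.val - 2*k) + 2*k)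
    · have heq : {v : Fin (3*k) | k ≤ v.val ∧ v.val < 2*k} =
          Set.range (fun i : Fin k => (⟨i.val + k, by have := i.isLt; omega⟩ : Fin (3*k))) := by
        ext v
        simp only [Set.mem_setOf_eq, Set.mem_range]
        constructor
        · rintro ⟨h1, h2⟩
          exact ⟨⟨v.val - k, by omega⟩, Fin.ext (by simp; omega)⟩
        · rintro ⟨i, rfl⟩
          have := i.isLt
          simp
          omega
      rw [heq, ncard_range]
      intro i j hij
      have := congrArg Fin.val hij
      simp only [] at this
      exact Fin.ext (by omega)
    · intro S' hS'
      have hpair : ∀ i : Fin k, ∃ v : Fin (3*k), v ∈ S' ∧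
          (v.val = i.val + k ∨ v.val = i.val + 2*k) := by
        intro i
        have hi := i.isLt
        have hdom := hS' ⟨i.val + 2*k, by omega⟩ (Tr k) (Tr_spanning hk)
        rcases hdom with h | ⟨u, hu, hadj⟩
        · exact ⟨_, h, Or.inr rfl⟩
        · refine ⟨u, hu, Or.inl ?_⟩
          rcases hadj with ⟨h0, rfl⟩ | ⟨h0, heq⟩
          · rw [pare_val]
            simp only []
            rw [if_neg (by omega)]
            omega
          · exfalso
            have hval := congrArg Fin.val heq
            have hu2 := u.isLt
            rw [pare_val] at hval
            simp only [] at hval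
            split at hval <;> omega
      choose g hg1 hg2 using hpair
      have hginj : Function.Injective g := by
        intro i j hij
        have h1 := hg2 i
        have h2 := hg2 j
        have h3 := congrArg Fin.val hij
        have hi := i.isLt
        have hj := j.isLt
        exact Fin.ext (by omega)
      calc k = (Set.range g).ncard := (ncard_range g hginj).symm
        _ ≤ S'.ncard := Set.ncard_le_ncard (by rintro _ ⟨i, rfl⟩; exact hg1 i) (Set.toFinite S')
  · refine ⟨{v | 1 ≤ v.val ∧ v.val < 2*k}, ?_, ?_, ?_⟩
    · rintro u v ⟨hne, hcase⟩
      have hu := u.isLt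
      have hv := v.isLt
      have hne' : u.val ≠ v.val := fun h => hne (Fin.ext h)
      simp only [Set.mem_setOf_eq]
      omega
    · have heq : {v : Fin (3*k) | 1 ≤ v.val ∧ v.val < 2*k} =
          Set.range (fun i : Fin (2*k-1) => (⟨i.val + 1, by have := i.isLt; omega⟩ : Fin (3*k))) := by
        ext v
        simp only [Set.mem_setOf_eq, Set.mem_range]
        constructor
        · rintro ⟨h1, h2⟩
          exact ⟨⟨v.val - 1, by omega⟩, Fin.ext (by simp; omega)⟩
        · rintro ⟨i, rfl⟩
          have := i.isLt
          simp
          omega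
      rw [heq, ncard_range]
      intro i j hij
      have := congrArg Fin.val hij
      simp only [] at this
      exact Fin.ext (by omega)
    · intro C' hC'
      have hsub : ({v : Fin (3*k) | v.val < k} \ C').ncard ≤ 1 := by
        rw [Set.ncard_le_one (Set.toFinite _)]
        intro a ha b hb
        by_contra hne
        have hadj : (Gr k).Adj a b := ⟨hne, Or.inl ⟨ha.1, hb.1⟩⟩
        rcases hC' hadj with h | h
        exacts [ha.2 h, hb.2 h]
      have hAcard : ({v : Fin (3*k) | v.val < k}).ncard = k := by
        have heq : {v : Fin (3*k) | v.val < k} =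
            Set.range (fun i : Fin k => (⟨i.val, by have := i.isLt; omega⟩ : Fin (3*k))) := by
          ext v
          simp only [Set.mem_setOf_eq, Set.mem_range]
          constructor
          · intro h1
            exact ⟨⟨v.val, by omega⟩, Fin.ext rfl⟩
          · rintro ⟨i, rfl⟩
            exact i.isLt
        rw [heq, ncard_range]
        intro i j hij
        have := congrArg Fin.val hij
        simp only [] at this
        exact Fin.ext (by omega)
      have hsplitA := Set.ncard_diff_add_ncard_of_subset
        (Set.diff_subset (s := {v : Fin (3*k) | v.val < k}) (t := C')) (Set.toFinite _)
      rw [Set.diff_diff_right_self] at hsplitA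
      have hpair : ∀ i : Fin k, ∃ v : Fin (3*k), v ∈ C' ∧
          (v.val = i.val + k ∨ v.val = i.val + 2*k) := by
        intro i
        have hi := i.isLt
        have hadj : (Gr k).Adj ⟨i.val + k, by omega⟩ ⟨i.val + 2*k, by omega⟩ :=
          ⟨Fin.ne_of_val_ne (by simp; omega), Or.inr (Or.inl (by simp; omega))⟩
        rcases hC' hadj with h | h
        exacts [⟨_, h, Or.inl rfl⟩, ⟨_, h, Or.inr rfl⟩]
      choose g hg1 hg2 using hpair
      have hginj : Function.Injective g := by
        intro i j hij
        have h1 := hg2 i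
        have h2 := hg2 j
        have h3 := congrArg Fin.val hij
        have hi := i.isLt
        have hj := j.isLt
        exact Fin.ext (by omega)
      have hCA : k ≤ (C' \ {v : Fin (3*k) | v.val < k}).ncard := by
        have hrange : Set.range g ⊆ C' \ {v : Fin (3*k) | v.val < k} := by
          rintro _ ⟨i, rfl⟩
          refine ⟨hg1 i, ?_⟩
          have h2 := hg2 i
          have hi := i.isLt
          simp only [Set.mem_setOf_eq]
          omega
        calc k = (Set.range g).ncard := (ncard_range g hginj).symm
          _ ≤ _ := Set.ncard_le_ncard hrange (Set.toFinite _)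
      have hdisj : Disjoint ({v : Fin (3*k) | v.val < k} ∩ C')
          (C' \ {v : Fin (3*k) | v.val < k}) := by
        rw [Set.disjoint_left]
        rintro x ⟨hxA, _⟩ ⟨_, hxA'⟩
        exact hxA' hxA
      have huncard := Set.ncard_union_eq hdisj (Set.toFinite _) (Set.toFinite _)
      have hle : (({v : Fin (3*k) | v.val < k} ∩ C') ∪
          (C' \ {v : Fin (3*k) | v.val < k})).ncard ≤ C'.ncard := by
        apply Set.ncard_le_ncard _ (Set.toFinite C')
        rintro x (⟨_, h⟩ | ⟨h, _⟩) <;> exact h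
      omega
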